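/- For n ≥ 2, the function H has no absorbing element: there is no a ∈ [0,1] such that for every x ∈ [0,1]^n and every index i, H applied to the vector obtained from x by replacing its i-th coordinate with a equals a. -/

import Mathlib

/-- The median of a vector `x : Fin n → ℝ`, computed from a non-decreasing
rearrangement of `x`. -/
noncomputable def med {n : ℕ} (x : Fin n → ℝ) : ℝ :=
  if hn : 0 < n then
    if n % 2 = 1 then (x ∘ Tuple.sort x) ⟨n / 2, by omega⟩
    else ((x ∘ Tuple.sort x) ⟨n / 2 - 1, by omega⟩ +
            (x ∘ Tuple.sort x) ⟨n / 2, by omega⟩) / 2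
  else 0

open Classical in
/-- The median-based weight functions. -/
noncomputable def hw {n : ℕ} (i : Fin n) (x : Fin n → ℝ) : ℝ :=
  if ∃ c : ℝ, ∀ j, x j = c then 1 / (n : ℝ)
  else (1 / ((n : ℝ) - 1)) * (1 - |x i - med x| / ∑ j, |x j - med x|)

/-- The DYOWA function `H` associated to the median-based weight functions. -/
noncomputable def Hmed {n : ℕ} (x : Fin n → ℝ) : ℝ :=
  ∑ i, hw i x * x i

lemma sorted_mid {n : ℕ} (a c : ℝ) (hac : a ≠ c) (i : Fin n)
    (k : Fin n) (hk1 : 0 < (k : ℕ)) (hk2 : (k : ℕ) < n - 1) :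
    ((Function.update (fun _ : Fin n => c) i a) ∘
      Tuple.sort (Function.update (fun _ : Fin n => c) i a)) k = c := by
  set y := Function.update (fun _ : Fin n => c) i a with hy
  have hn : 0 < n := k.pos
  set σ := Tuple.sort y with hσ
  have hmono : Monotone (y ∘ σ) := Tuple.monotone_sort y
  have hyv : ∀ j, y j = if j = i then a else c := by
    intro j
    by_cases h : j = i <;> simp [hy, Function.update, h]
  have hval : ∀ j : Fin n, (y ∘ σ) j = a ∨ (y ∘ σ) j = c := by
    intro j
    rw [Function.comp_apply, hyv]
    split <;> simp
  have hgi : ∀ j : Fin n, (y ∘ σ) j = a → σ j = i := by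
    intro j h
    rw [Function.comp_apply, hyv] at h
    by_contra hne
    rw [if_neg hne] at h
    exact hac h.symm
  by_contra hkc
  have hka : (y ∘ σ) k = a := (hval k).resolve_right hkc
  rcases lt_or_gt_of_ne hac with hlt | hgt
  · -- a < c : then (y∘σ) 0 = a as well, contradiction with injectivity
    have h0 : (y ∘ σ) ⟨0, hn⟩ = a := by
      rcases hval ⟨0, hn⟩ with h | h
      · exact h
      · have := hmono (show (⟨0, hn⟩ : Fin n) ≤ k from Fin.mk_le_of_le_val (Nat.zero_le _))
        rw [h, hka] at this
        exact absurd this (not_le.mpr hlt)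
    have := σ.injective ((hgi _ h0).trans (hgi _ hka).symm)
    rw [Fin.ext_iff] at this
    simp at this
    omega
  · have hlast : (y ∘ σ) ⟨n - 1, by omega⟩ = a := by
      rcases hval ⟨n - 1, by omega⟩ with h | h
      · exact h
      · have := hmono (show k ≤ (⟨n - 1, by omega⟩ : Fin n) by
          rw [Fin.le_def]; simp; omega)
        rw [h, hka] at this
        exact absurd this (not_le.mpr hgt)
    have := σ.injective ((hgi _ hlast).trans (hgi _ hka).symm)
    rw [Fin.ext_iff] at this
    simp at this
    omega

lemma med_update {n : ℕ} (hn : 3 ≤ n) (a c : ℝ) (hac : a ≠ c) (i : Fin n) :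
    med (Function.update (fun _ : Fin n => c) i a) = c := by
  rw [med, dif_pos (by omega : 0 < n)]
  by_cases hpar : n % 2 = 1
  · rw [if_pos hpar]
    exact sorted_mid a c hac i _ (by simp; omega) (by simp; omega)
  · rw [if_neg hpar]
    rw [sorted_mid a c hac i _ (by simp; omega) (by simp; omega),
        sorted_mid a c hac i _ (by simp; omega) (by simp; omega)]
    ring


lemma nonconst_update {n : ℕ} (hn : 2 ≤ n) (a c : ℝ) (hac : a ≠ c) (i : Fin n) :
    ¬ ∃ k : ℝ, ∀ j, (Function.update (fun _ : Fin n => c) i a) j = k := by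
  rintro ⟨k, hk⟩
  obtain ⟨j, hj⟩ := Fintype.exists_ne_of_one_lt_card (by simp; omega) i
  have h1 := hk i
  have h2 := hk j
  rw [Function.update_self] at h1
  rw [Function.update_of_ne hj] at h2
  exact hac (h1.trans h2.symm)

lemma sum_abs_update {n : ℕ} (a c : ℝ) (i : Fin n) :
    ∑ j, |(Function.update (fun _ : Fin n => c) i a) j - c| = |a - c| := by
  rw [Finset.sum_eq_single_of_mem i (Finset.mem_univ i)]
  · rw [Function.update_self]
  · intro j _ hj
    rw [Function.update_of_ne hj]
    simp

lemma Hmed_update {n : ℕ} (hn : 3 ≤ n) (a c : ℝ) (hac : a ≠ c) (i : Fin n) :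
    Hmed (Function.update (fun _ : Fin n => c) i a) = c := by
  set y := Function.update (fun _ : Fin n => c) i a with hy
  have hmed : med y = c := med_update hn a c hac i
  have hnc : ¬ ∃ k : ℝ, ∀ j, y j = k := nonconst_update (by omega) a c hac i
  have hS : ∑ j, |y j - med y| = |a - c| := by rw [hmed]; exact sum_abs_update a c i
  have habs : |a - c| ≠ 0 := by simpa [sub_eq_zero] using hac
  have hn1 : (n : ℝ) - 1 ≠ 0 := by
    have : (3 : ℝ) ≤ n := by exact_mod_cast hn
    linarith
  have h2 : hw i y * y i = 0 := by
    rw [hw, if_neg hnc, hS, hmed, hy, Function.update_self]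
    rw [div_self habs]
    ring
  have h1 : ∀ j ∈ Finset.univ.erase i, hw j y * y j = c / ((n : ℝ) - 1) := by
    intro j hj
    have hji : j ≠ i := Finset.ne_of_mem_erase hj
    rw [hw, if_neg hnc, hS, hmed, hy, Function.update_of_ne hji]
    simp
    ring
  rw [Hmed, ← Finset.add_sum_erase _ _ (Finset.mem_univ i), h2, zero_add,
      Finset.sum_congr rfl h1, Finset.sum_const, Finset.card_erase_of_mem (Finset.mem_univ i),
      Finset.card_univ, Fintype.card_fin, nsmul_eq_mul]
  rw [Nat.cast_sub (by omega), Nat.cast_one]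
  field_simp

lemma med_update2 (a c : ℝ) :
    med (Function.update (fun _ : Fin 2 => c) 0 a) = (a + c) / 2 := by
  set y := Function.update (fun _ : Fin 2 => c) 0 a with hy
  have hsum : (y ∘ Tuple.sort y) 0 + (y ∘ Tuple.sort y) 1 = a + c := by
    have h := Equiv.sum_comp (Tuple.sort y) y
    rw [Fin.sum_univ_two, Fin.sum_univ_two] at h
    have h0 : y 0 = a := by rw [hy, Function.update_self]
    have h1 : y 1 = c := by rw [hy, Function.update_of_ne (by decide)]
    rw [h0, h1] at h
    exact h
  rw [med, dif_pos (by norm_num)]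
  norm_num
  exact hsum

lemma Hmed_update2 (a c : ℝ) (hac : a ≠ c) :
    Hmed (Function.update (fun _ : Fin 2 => c) 0 a) = (a + c) / 2 := by
  set y := Function.update (fun _ : Fin 2 => c) 0 a with hy
  have h0 : y 0 = a := by rw [hy, Function.update_self]
  have h1 : y 1 = c := by rw [hy, Function.update_of_ne (by decide)]
  have hmed : med y = (a + c) / 2 := med_update2 a c
  have hnc : ¬ ∃ k : ℝ, ∀ j, y j = k := nonconst_update (by omega) a c hac 0
  have habs : |a - c| ≠ 0 := by simpa [sub_eq_zero] using hac
  have hd0 : |y 0 - med y| = |a - c| / 2 := by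
    rw [h0, hmed]
    rw [show a - (a + c) / 2 = (a - c) / 2 by ring, abs_div, abs_two]
  have hd1 : |y 1 - med y| = |a - c| / 2 := by
    rw [h1, hmed]
    rw [show c - (a + c) / 2 = (c - a) / 2 by ring, abs_div, abs_two, abs_sub_comm]
  have hS : ∑ j, |y j - med y| = |a - c| := by
    rw [Fin.sum_univ_two, hd0, hd1]; ring
  have hwv : ∀ j : Fin 2, hw j y = 1 / 2 := by
    intro j
    rw [hw, if_neg hnc, hS]
    fin_cases j <;> simp only [show ((⟨0, by norm_num⟩ : Fin 2)) = 0 from rfl,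
      show ((⟨1, by norm_num⟩ : Fin 2)) = 1 from rfl, id]
    all_goals first | rw [hd0] | rw [hd1]
    all_goals rw [div_div, mul_comm (2:ℝ) |a - c|, ← div_div, div_self habs]; norm_num
  rw [Hmed, Fin.sum_univ_two, hwv 0, hwv 1, h0, h1]
  ring


/-- The function `H` has no absorbing element. -/
theorem Hmed_no_absorbing_element {n : ℕ} (hn : 2 ≤ n) :
    ¬ ∃ a ∈ Set.Icc (0 : ℝ) 1, ∀ x : Fin n → ℝ,
      (∀ j, x j ∈ Set.Icc (0 : ℝ) 1) → ∀ i : Fin n,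
      Hmed (Function.update x i a) = a := by
  rintro ⟨a, ⟨ha0, ha1⟩, habs⟩
  set c : ℝ := if a < 1/2 then 1 else 0 with hc
  have hcI : ∀ j : Fin n, (fun _ : Fin n => c) j ∈ Set.Icc (0 : ℝ) 1 := by
    intro j; rw [hc]; split_ifs <;> norm_num
  have hac : a ≠ c := by
    rw [hc]; split_ifs with h
    · intro hh; rw [hh] at h; norm_num at h
    · intro hh; rw [hh] at h; norm_num at h
  rcases Nat.lt_or_ge n 3 with h3 | h3
  · obtain rfl : n = 2 := by omega
    have key := habs (fun _ => c) hcI 0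
    rw [Hmed_update2 a c hac] at key
    apply hac
    linarith
  · have key := habs (fun _ => c) hcI ⟨0, by omega⟩
    rw [Hmed_update h3 a c hac ⟨0, by omega⟩] at key
    exact hac key.symm
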